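/- Let n ≥ 2, let k ∈ {1,…,n}, and let S ⊆ {1,…,n} be a set of coordinates with k ∈ S and |S| ≥ 2. Let K = {x ∈ [0,1]^n : the restriction of x to the coordinates in S lies in the parity polytope of degree |S|} be the lifted local check polytope of a parity-check node whose variable-node neighborhood is S. Let Q ⊆ [0,1]^n be any set that does not constrain coordinate k, meaning: if x ∈ Q, t ∈ [0,1], and x' agrees with x on all coordinates except possibly x'_k = t, then x' ∈ Q. Then the projection of Q ∩ K onto the coordinates {1,…,n} ∖ {k} equals the projection of Q onto those coordinates. Consequently, for any objective vector c ∈ ℝ^n with c_k = 0, the infimum of cᵀx over Q ∩ K equals the infimum of cᵀx over Q: the constraints of a parity-check node connected to a degree-1 auxiliary variable node (a variable appearing in no other constraint and with zero objective coefficient) do not affect the LP decoder solution, so that node and its check-node neighbor can be deleted. (Lemma 1.) -/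

import Mathlib

/-- The parity polytope of degree `d`: the convex hull in `ℝ^d` of the binary
vectors with an even number of ones. -/
def parityPolytope (d : ℕ) : Set (Fin d → ℝ) :=
  convexHull ℝ {x : Fin d → ℝ | ∃ c : Fin d → Bool,
    Even (Finset.univ.filter (fun i => c i = true)).card ∧
    x = fun i => if c i then 1 else 0}

lemma parityPolytope_subset_box (d : ℕ) :
    parityPolytope d ⊆ {x : Fin d → ℝ | ∀ i, x i ∈ Set.Icc (0 : ℝ) 1} := by
  apply convexHull_min
  · rintro x ⟨c, -, rfl⟩ i
    by_cases h : c i <;> simp [h]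
  · intro x hx y hy a b ha hb hab i
    exact (convex_Icc (0:ℝ) 1) (hx i) (hy i) ha hb hab

lemma exists_parity_extension (d : ℕ) (j : Fin d) (y : Fin d → ℝ)
    (hy : ∀ i, y i ∈ Set.Icc (0 : ℝ) 1) :
    ∃ t ∈ Set.Icc (0 : ℝ) 1, Function.update y j t ∈ parityPolytope d := by
  set V := {x : Fin d → ℝ | ∃ c : Fin d → Bool,
    Even (Finset.univ.filter (fun i => c i = true)).card ∧
    x = fun i => if c i then 1 else 0} with hV
  have hVP : parityPolytope d = convexHull ℝ V := rfl
  set f : (Fin d → ℝ) → (Fin d → ℝ) := fun z i => if i = j then 0 else z i with hf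
  have hlin : IsLinearMap ℝ f := by
    constructor
    · intro a b; funext i; by_cases h : i = j <;> simp [hf, h]
    · intro a b; funext i; by_cases h : i = j <;> simp [hf, h]
  have himg : f '' V = Set.pi Set.univ
      (fun i : Fin d => if i = j then ({0} : Set ℝ) else {0, 1}) := by
    ext w
    constructor
    · rintro ⟨x, ⟨c, -, rfl⟩, rfl⟩ i -
      by_cases h : i = j
      · simp [hf, h]
      · by_cases hc : c i <;> simp [hf, h, hc]
    · intro hw
      set c' : Fin d → Bool := fun i => if i = j then false else decide (w i = 1) with hc'
      set m := (Finset.univ.filter (fun i => c' i = true)).card with hm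
      set c : Fin d → Bool := Function.update c' j (decide (¬ Even m)) with hc
      have hjc' : j ∉ Finset.univ.filter (fun i => c' i = true) := by simp [hc']
      have heven : Even (Finset.univ.filter (fun i => c i = true)).card := by
        by_cases he : Even m
        · have hcc : c = c' := by
            funext i
            by_cases h : i = j
            · subst h; simp [hc, hc', he]
            · simp [hc, Function.update, h]
          rw [hcc, ← hm]; exact he
        · have hcj : c j = true := by simp [hc, he]
          have hfil : Finset.univ.filter (fun i => c i = true)
              = insert j (Finset.univ.filter (fun i => c' i = true)) := by
            ext i
            by_cases h : i = j
            · subst h; simp [hcj]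
            · simp [hc, Function.update, h]
          rw [hfil, Finset.card_insert_of_notMem hjc', ← hm]
          exact (Nat.even_add_one).mpr (by simpa using he)
      refine ⟨fun i => if c i then 1 else 0, ⟨c, heven, rfl⟩, ?_⟩
      funext i
      by_cases h : i = j
      · subst h
        have hwj' : w i = 0 := by simpa using hw i (Set.mem_univ i)
        simp [hf, hwj']
      · have hwi : w i ∈ ({0, 1} : Set ℝ) := by
          have := hw i (Set.mem_univ i); simpa [h] using this
        have hci : c i = decide (w i = 1) := by simp [hc, Function.update, h, hc']
        rcases hwi with h0 | h1
        · have hcif : c i = false := by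
            rw [hci]; simp only [decide_eq_false_iff_not]; intro hh
            rw [hh] at h0; norm_num at h0
          simp [hf, h, hcif, h0]
        · have h1' : w i = 1 := h1
          have hcit : c i = true := by rw [hci]; simp [h1']
          simp [hf, h, hcit, h1']
  have hmem : f y ∈ f '' parityPolytope d := by
    rw [hVP, hlin.image_convexHull, himg, convexHull_pi]
    intro i _
    by_cases h : i = j
    · simp [hf, h, convexHull_singleton]
    · have hfy : f y i = y i := by simp [hf, h]
      show f y i ∈ convexHull ℝ (if i = j then ({0} : Set ℝ) else {0, 1})
      rw [if_neg h, hfy, convexHull_pair, segment_eq_Icc (by norm_num : (0:ℝ) ≤ 1)]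
      exact hy i
  obtain ⟨z, hz, hfz⟩ := hmem
  refine ⟨z j, parityPolytope_subset_box d hz j, ?_⟩
  have hzy : Function.update y j (z j) = z := by
    funext i
    by_cases h : i = j
    · subst h; simp
    · have h1 : f z i = z i := by simp [hf, h]
      have h2 : f y i = y i := by simp [hf, h]
      rw [Function.update_of_ne h, ← h2, ← hfz, h1]
  rw [hzy]; exact hz

/-- The lifted local check polytope of a parity-check node with variable-node
neighborhood `S`: all `x ∈ [0,1]^n` whose restriction to the coordinates in `S`
(listed in increasing order) lies in the parity polytope of degree `|S|`. -/
def liftedCheckPolytope {n : ℕ} (S : Finset (Fin n)) : Set (Fin n → ℝ) :=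
  {x | (∀ i, x i ∈ Set.Icc (0 : ℝ) 1) ∧
    (fun t : Fin S.card => x ((S.orderIsoOfFin rfl t : S) : Fin n)) ∈ parityPolytope S.card}

/-- **Lemma 1.** Let `k ∈ S`, `|S| ≥ 2`, and let `K` be the lifted
local check polytope of a check node with neighborhood `S`. If `Q ⊆ [0,1]^n`
does not constrain the coordinate `k` (a degree-1 auxiliary variable node),
then the projection of `Q ∩ K` onto the coordinates `≠ k` equals that of `Q`;
consequently, for any objective `c` with `c k = 0`, the infimum of `cᵀx` over
`Q ∩ K` equals the infimum over `Q`: the check node and the degree-1 auxiliary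
variable node can be deleted without affecting the LP decoder solution. -/
theorem degree_one_aux_var_check_removable (n : ℕ) (hn : 2 ≤ n) (k : Fin n)
    (S : Finset (Fin n)) (hkS : k ∈ S) (hS : 2 ≤ S.card)
    (Q : Set (Fin n → ℝ))
    (hQbox : Q ⊆ {x | ∀ i, x i ∈ Set.Icc (0 : ℝ) 1})
    (hQfree : ∀ x ∈ Q, ∀ t ∈ Set.Icc (0 : ℝ) 1, Function.update x k t ∈ Q) :
    ((fun x : Fin n → ℝ => fun i : {i : Fin n // i ≠ k} => x i) ''
          (Q ∩ liftedCheckPolytope S)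
        = (fun x : Fin n → ℝ => fun i : {i : Fin n // i ≠ k} => x i) '' Q) ∧
      ∀ c : Fin n → ℝ, c k = 0 →
        sInf ((fun x : Fin n → ℝ => ∑ i, c i * x i) '' (Q ∩ liftedCheckPolytope S))
          = sInf ((fun x : Fin n → ℝ => ∑ i, c i * x i) '' Q) := by
  set e := S.orderIsoOfFin rfl with he
  set j : Fin S.card := e.symm ⟨k, hkS⟩ with hj
  have hej : ((e j : S) : Fin n) = k := by rw [hj]; simp
  have key : ∀ x ∈ Q, ∃ x' ∈ Q ∩ liftedCheckPolytope S,
      ∀ i : Fin n, i ≠ k → x' i = x i := by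
    intro x hx
    obtain ⟨t, ht, hmem⟩ := exists_parity_extension S.card j
      (fun i => x ((e i : S) : Fin n)) (fun i => hQbox hx _)
    have hq' : Function.update x k t ∈ Q := hQfree x hx t ht
    have hres : (fun i : Fin S.card => Function.update x k t ((e i : S) : Fin n))
        = Function.update (fun i => x ((e i : S) : Fin n)) j t := by
      funext i
      by_cases h : i = j
      · subst h; rw [hej]; simp
      · have hne : ((e i : S) : Fin n) ≠ k := by
          intro hh
          apply h
          have h2 : (e i : S) = ⟨k, hkS⟩ := Subtype.ext hh
          rw [hj, ← h2]; simp
        rw [Function.update_of_ne hne, Function.update_of_ne h]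
    refine ⟨Function.update x k t, ⟨hq', hQbox hq', ?_⟩, ?_⟩
    · rw [← he] at *; rw [hres]; exact hmem
    · intro i hik; exact Function.update_of_ne hik _ _
  constructor
  · apply Set.Subset.antisymm
    · exact Set.image_mono Set.inter_subset_left
    · rintro w ⟨x, hx, rfl⟩
      obtain ⟨x', hx', hagree⟩ := key x hx
      exact ⟨x', hx', by funext i; exact hagree i i.2⟩
  · intro c hc
    congr 1
    apply Set.Subset.antisymm
    · exact Set.image_mono Set.inter_subset_left
    · rintro r ⟨x, hx, rfl⟩
      obtain ⟨x', hx', hagree⟩ := key x hx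
      refine ⟨x', hx', ?_⟩
      apply Finset.sum_congr rfl
      intro i _
      by_cases h : i = k
      · subst h; rw [hc]; ring
      · rw [hagree i h]
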